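/- Let R be a commutative reduced clean ring that is Hopfian. Then the polynomial ring R[x] is Hopfian: every surjective ring homomorphism R[x] → R[x] is an automorphism. -/

import Mathlib

open Polynomial

private lemma aux_zero_of_mem_all_primes {R : Type*} [CommRing R] [IsReduced R] {a : R}
    (h : ∀ Q : Ideal R, Q.IsPrime → a ∈ Q) : a = 0 := by
  have hn : IsNilpotent a := by
    rw [← mem_nilradical, nilradical_eq_sInf, Submodule.mem_sInf]
    rintro I hI
    exact h I hI
  exact hn.eq_zero

open Polynomial in
theorem stmt_17 {R : Type*} [CommRing R] [IsReduced R]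
    (hclean : ∀ a : R, ∃ u e : R, IsUnit u ∧ IsIdempotentElem e ∧ a = u + e)
    (hHopf : ∀ g : R →+* R, Function.Surjective g → Function.Bijective g) :
    ∀ f : R[X] →+* R[X], Function.Surjective f → Function.Bijective f := by
  intro f hf
  -- Step 1: `f (C a)` is a constant polynomial for every `a`.
  have hconst : ∀ a : R, ∃ b : R, f (C a) = C b := by
    intro a
    obtain ⟨u, e, hu, he, rfl⟩ := hclean a
    have key : ∀ i : ℕ, 0 < i → (f (C (u + e))).coeff i = 0 := by
      intro i hi
      apply aux_zero_of_mem_all_primes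
      intro Q hQ
      haveI := hQ
      set π := Ideal.Quotient.mk Q with hπ
      -- unit part is constant mod Q
      have h1 : ((f (C u)).map π).natDegree = 0 := by
        apply natDegree_eq_zero_of_isUnit
        exact ((isUnit_C.2 hu).map f).map (mapRingHom π)
      -- idempotent part is constant mod Q (domain has only 0, 1)
      have h2 : ((f (C e)).map π).natDegree = 0 := by
        set q := (f (C e)).map π with hqdef
        have hid : q * q = q := by
          rw [hqdef, ← Polynomial.map_mul, ← map_mul f, ← C_mul, he.eq]
        have : q * (q - 1) = 0 := by rw [mul_sub, hid, mul_one, sub_self]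
        rcases mul_eq_zero.mp this with h | h
        · rw [h]; simp
        · have : q = 1 := by linear_combination h
          rw [this]; simp
      have hsum : (f (C (u + e))).map π = (f (C u)).map π + (f (C e)).map π := by
        rw [← Polynomial.map_add, ← map_add f, ← C_add]
      have hz : ((f (C (u + e))).map π).coeff i = 0 := by
        rw [hsum, coeff_add,
          coeff_eq_zero_of_natDegree_lt (by omega : ((f (C u)).map π).natDegree < i),
          coeff_eq_zero_of_natDegree_lt (by omega : ((f (C e)).map π).natDegree < i), add_zero]
      rw [coeff_map] at hz
      exact Ideal.Quotient.eq_zero_iff_mem.mp hz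
    have hnd : (f (C (u + e))).natDegree = 0 :=
      Nat.le_zero.mp (natDegree_le_iff_coeff_eq_zero.mpr fun m hm => key m hm)
    exact ⟨(f (C (u + e))).coeff 0, eq_C_of_natDegree_eq_zero hnd⟩
  -- the induced endomorphism of R
  set g : R →+* R := constantCoeff.comp (f.comp Polynomial.C) with hg
  have hgC : ∀ a : R, f (C a) = C (g a) := by
    intro a
    obtain ⟨b, hb⟩ := hconst a
    rw [hb]
    congr 1
    simp [hg, hb]
  set t : R[X] := f X with htdef
  -- f p = (p.map g).comp t
  have hfeq : f = eval₂RingHom ((Polynomial.C).comp g) t := by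
    apply ringHom_ext
    · intro a
      simp [coe_eval₂RingHom, hgC a]
    · simp [coe_eval₂RingHom, htdef]
  have hfp : ∀ p : R[X], f p = (p.map g).comp t := by
    intro p
    rw [hfeq]
    simp only [coe_eval₂RingHom, comp, eval₂_map]
  -- preimage of X
  obtain ⟨q, hq⟩ := hf X
  rw [hfp] at hq
  -- mod every prime, t has natDegree 1
  have hdeg : ∀ Q : Ideal R, Q.IsPrime → (t.map (Ideal.Quotient.mk Q)).natDegree = 1 := by
    intro Q hQ
    haveI := hQ
    set π := Ideal.Quotient.mk Q with hπ
    have h1 : ((q.map g).map π).comp (t.map π) = X := by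
      rw [← Polynomial.map_comp, hq, Polynomial.map_X]
    have h2 := congrArg natDegree h1
    rw [natDegree_comp, natDegree_X] at h2
    exact Nat.eq_one_of_dvd_one ⟨_, h2.symm.trans (mul_comm _ _)⟩
  -- coefficients of t above degree 1 vanish
  have hcoeff2 : ∀ i : ℕ, 2 ≤ i → t.coeff i = 0 := by
    intro i hi
    apply aux_zero_of_mem_all_primes
    intro Q hQ
    have h1 := hdeg Q hQ
    have h2 : (t.map (Ideal.Quotient.mk Q)).coeff i = 0 :=
      coeff_eq_zero_of_natDegree_lt (by omega)
    rw [coeff_map] at h2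
    exact Ideal.Quotient.eq_zero_iff_mem.mp h2
  -- the linear coefficient of t is a unit
  have hv : IsUnit (t.coeff 1) := by
    by_contra hnu
    obtain ⟨M, hM, hmem⟩ := exists_max_ideal_of_mem_nonunits hnu
    haveI := hM.isPrime
    have h1 := hdeg M hM.isPrime
    have h2 : (t.map (Ideal.Quotient.mk M)).coeff 1 = 0 := by
      rw [coeff_map]
      exact Ideal.Quotient.eq_zero_iff_mem.mpr hmem
    have h3 : t.map (Ideal.Quotient.mk M) ≠ 0 := by
      intro h0
      rw [h0] at h1
      simp at h1
    have h4 : (t.map (Ideal.Quotient.mk M)).leadingCoeff ≠ 0 := by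
      rwa [Ne, leadingCoeff_eq_zero]
    rw [leadingCoeff, h1, h2] at h4
    exact h4 rfl
  have hndt : t.natDegree ≤ 1 :=
    natDegree_le_iff_coeff_eq_zero.mpr fun m hm => hcoeff2 m (by omega)
  have ht : t = C (t.coeff 1) * X + C (t.coeff 0) := eq_X_add_C_of_natDegree_le_one hndt
  obtain ⟨vu, hvu⟩ := hv
  set s := t.coeff 0 with hs
  set w : R[X] := C (↑vu⁻¹ : R) * (X - C s) with hw
  have hvv : ((vu : R) * ↑vu⁻¹) = 1 := by
    rw [← Units.val_mul, mul_inv_cancel] -- maybe mul_inv_self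
    rfl
  have hvv' : ((↑vu⁻¹ : R) * ↑vu) = 1 := by rw [mul_comm]; exact hvv
  have htw : t.comp w = X := by
    rw [ht, hw]
    simp only [add_comp, mul_comp, C_comp, X_comp, hvu.symm]
    rw [← mul_assoc, ← C_mul, hvv, C_1, one_mul]
    ring
  have hwt : w.comp t = X := by
    rw [hw, ht]
    simp only [mul_comp, sub_comp, C_comp, X_comp, hvu.symm]
    rw [add_sub_cancel_right, ← mul_assoc, ← C_mul, hvv', C_1, one_mul]
  -- comp with t is a ring automorphism
  have hcompt_li : ∀ p : R[X], (p.comp t).comp w = p := by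
    intro p
    rw [comp_assoc, htw, comp_X]
  have hcompt_inj : Function.Injective (fun p : R[X] => p.comp t) := by
    intro a b hab
    have := congrArg (fun p : R[X] => p.comp w) hab
    simpa [hcompt_li] using this
  -- g is surjective
  have hgsurj : Function.Surjective g := by
    intro r
    obtain ⟨z, hz⟩ := hf ((C r).comp t)
    rw [hfp] at hz
    have hzz : z.map g = C r := hcompt_inj hz
    refine ⟨z.coeff 0, ?_⟩
    have := congrArg (fun p : R[X] => p.coeff 0) hzz
    simpa [coeff_map] using this
  have hgbij := hHopf g hgsurj
  -- f is injective
  have hfinj : Function.Injective f := by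
    intro a b hab
    rw [hfp, hfp] at hab
    exact Polynomial.map_injective g hgbij.1 (hcompt_inj hab)
  exact ⟨hfinj, hf⟩
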